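/- Integer covering existence. Let P ⊆ ℝⁿ, let f : ℝⁿ → ℝᵐ be affine with 0 ≤ f_j(x) ≤ ω for all x ∈ P and j ∈ {1,…,m} (0 < ω ≤ 1), and let λ* = max_{x∈P} min_j f_j(x) > 0. Let X_1, …, X_s be independent P-valued random vectors with E[f_j(X_i)] ≥ λ* for every i and j, and suppose s ≥ 1/λ*. Then for every ε with 0 < ε < 1, Pr[ ∃ j : Σ_{i=1}^s f_j(X_i) ≤ 1 − ε ] < m / exp(b(−ε)/ω), where b(−ε) = (1−ε)ln(1−ε) + ε. -/

import Mathlib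

open MeasureTheory ProbabilityTheory

/-- Convexity bound: for `y ∈ [0, w]`, `exp (t*y) ≤ 1 + (y/w) * (exp (t*w) - 1)`. -/
lemma exp_convexity_aux {t w y : ℝ} (hw : 0 < w) (hy0 : 0 ≤ y) (hyw : y ≤ w) :
    Real.exp (t * y) ≤ 1 + (y / w) * (Real.exp (t * w) - 1) := by
  have hb : 0 ≤ y / w := div_nonneg hy0 hw.le
  have ha : 0 ≤ 1 - y / w := by
    have : y / w ≤ 1 := (div_le_one hw).2 hyw
    linarith
  have hab : (1 - y / w) + y / w = 1 := by ring
  have h := convexOn_exp.2 (Set.mem_univ (0 : ℝ)) (Set.mem_univ (t * w)) ha hb hab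
  have h1 : (1 - y / w) • (0 : ℝ) + (y / w) • (t * w) = t * y := by
    simp only [smul_eq_mul]
    field_simp
    ring
  rw [h1] at h
  calc Real.exp (t * y) ≤ (1 - y / w) • Real.exp 0 + (y / w) • Real.exp (t * w) := h
    _ = 1 + (y / w) * (Real.exp (t * w) - 1) := by
        simp only [smul_eq_mul, Real.exp_zero]; ring

/-- **Integer covering existence** (Lemma 12 of the paper).
Let `f : ℝⁿ → ℝᵐ` be affine with `0 ≤ f x j ≤ w` on `P` (`0 < w ≤ 1`) and let
`lam = max_{x ∈ P} min_j f x j > 0`.  If `X 1, …, X s` are independent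
`P`-valued random vectors with `E[f (X i) j] ≥ lam` for all `i, j` and
`s ≥ 1/lam`, then for every `0 < ε < 1` the probability that
`Σᵢ f (X i) j ≤ 1 − ε` for some `j` is less than `m / exp (b(−ε)/w)`,
where `b(−ε) = (1−ε)ln(1−ε) + ε`. -/
theorem integer_covering_existence {Ω : Type*} [MeasurableSpace Ω]
    (μ : Measure Ω) [IsProbabilityMeasure μ]
    (n m s : ℕ) (hm : 1 ≤ m)
    (P : Set (Fin n → ℝ)) (f : (Fin n → ℝ) →ᵃ[ℝ] (Fin m → ℝ))
    (w : ℝ) (hw : 0 < w) (hw1 : w ≤ 1)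
    (hfb : ∀ x ∈ P, ∀ j, f x j ∈ Set.Icc 0 w)
    (lam : ℝ) (hlam : IsGreatest ((fun x => ⨅ j, f x j) '' P) lam)
    (hlampos : 0 < lam)
    (hs : 1 / lam ≤ (s : ℝ))
    (X : Fin s → Ω → (Fin n → ℝ))
    (hmeas : ∀ i, Measurable (X i))
    (hP : ∀ i, ∀ ω, X i ω ∈ P)
    (hindep : iIndepFun X μ)
    (hmean : ∀ i j, lam ≤ ∫ ω, f (X i ω) j ∂μ)
    (ε : ℝ) (hε : 0 < ε) (hε1 : ε < 1) :
    μ {ω | ∃ j, ∑ i, f (X i ω) j ≤ 1 - ε}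
      < ENNReal.ofReal
          (m * Real.exp (-(((1 - ε) * Real.log (1 - ε) + ε) / w))) := by
  have h1ε : (0:ℝ) < 1 - ε := by linarith
  set B : ℝ := Real.exp (-(((1 - ε) * Real.log (1 - ε) + ε) / w)) with hB
  -- basic facts about lam, s
  obtain ⟨⟨x0, hx0P, hx0⟩, _⟩ := hlam
  have hlamw : lam ≤ w := by
    have h1 : (⨅ j, f x0 j) ≤ f x0 ⟨0, hm⟩ :=
      ciInf_le (Finite.bddBelow_range _) _
    have h2 := (hfb x0 hx0P ⟨0, hm⟩).2
    have hx0' : (⨅ j, f x0 j) = lam := hx0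
    rw [hx0'] at h1
    linarith
  have hslam : 1 ≤ (s:ℝ) * lam := by
    rw [div_le_iff₀ hlampos] at hs
    linarith
  have hs1 : s ≠ 0 := by
    intro h
    rw [h] at hslam
    simp at hslam
    linarith
  -- the tilt parameter
  set t : ℝ := Real.log (1 - ε) / w with ht_def
  have hlog : Real.log (1 - ε) < 0 := Real.log_neg h1ε (by linarith)
  have ht : t ≤ 0 := le_of_lt (div_neg_of_neg_of_pos hlog hw)
  have htw : t * w = Real.log (1 - ε) := div_mul_cancel₀ _ hw.ne'
  have hetw : Real.exp (t * w) = 1 - ε := by rw [htw, Real.exp_log h1ε]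
  -- the coordinate maps are measurable
  have hgmeas : ∀ j : Fin m, Measurable fun x : Fin n → ℝ => f x j := fun j =>
    (measurable_pi_apply j).comp f.continuous_of_finiteDimensional.measurable
  -- per-coordinate Chernoff bound
  have key : ∀ j : Fin m,
      (μ {ω | ∑ i, f (X i ω) j ≤ 1 - ε}).toReal < B := by
    intro j
    set Y : Fin s → Ω → ℝ := fun i ω => f (X i ω) j with hY
    have hYmeas : ∀ i, Measurable (Y i) := fun i => (hgmeas j).comp (hmeas i)
    have hY0 : ∀ i ω, 0 ≤ Y i ω := fun i ω => (hfb _ (hP i ω) j).1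
    have hYw : ∀ i ω, Y i ω ≤ w := fun i ω => (hfb _ (hP i ω) j).2
    have hYindep : iIndepFun Y μ :=
      hindep.comp (fun _ x => f x j) (fun _ => hgmeas j)
    -- integrability of exp(t * ·) for nonnegative random variables (t ≤ 0)
    have hexp_le_one : ∀ (g : Ω → ℝ), (∀ ω, 0 ≤ g ω) →
        ∀ ω, ‖Real.exp (t * g ω)‖ ≤ 1 := by
      intro g hg ω
      rw [Real.norm_eq_abs, abs_of_pos (Real.exp_pos _)]
      rw [show (1:ℝ) = Real.exp 0 by rw [Real.exp_zero]]
      exact Real.exp_le_exp.2 (mul_nonpos_of_nonpos_of_nonneg ht (hg ω))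
    have hint : ∀ i, Integrable (fun ω => Real.exp (t * Y i ω)) μ := fun i =>
      Integrable.mono' (integrable_const 1)
        (((hYmeas i).const_mul t).exp.aestronglyMeasurable)
        (ae_of_all _ (hexp_le_one (Y i) (fun ω => hY0 i ω)))
    have hYint : ∀ i, Integrable (Y i) μ := fun i =>
      Integrable.mono' (integrable_const w) (hYmeas i).aestronglyMeasurable
        (ae_of_all _ fun ω => by
          rw [Real.norm_eq_abs, abs_of_nonneg (hY0 i ω)]; exact hYw i ω)
    -- mgf bound per i
    have hK0 : 0 < 1 - lam * ε / w := by
      have : lam * ε / w ≤ ε := by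
        rw [div_le_iff₀ hw]
        nlinarith
      linarith
    have hmgf_le : ∀ i, mgf (Y i) μ t ≤ 1 - lam * ε / w := by
      intro i
      have hptw : ∀ ω, Real.exp (t * Y i ω)
          ≤ 1 + (Y i ω / w) * (Real.exp (t*w) - 1) :=
        fun ω => exp_convexity_aux hw (hY0 i ω) (hYw i ω)
      have hrhs_int : Integrable
          (fun ω => 1 + (Y i ω / w) * (Real.exp (t*w) - 1)) μ :=
        (integrable_const 1).add (((hYint i).div_const w).mul_const _)
      calc mgf (Y i) μ t ≤ ∫ ω, (1 + (Y i ω / w) * (Real.exp (t*w) - 1)) ∂μ :=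
            integral_mono (hint i) hrhs_int hptw
        _ = 1 + ((∫ ω, Y i ω ∂μ) / w) * (Real.exp (t*w) - 1) := by
            rw [integral_add (integrable_const 1)
              (((hYint i).div_const w).mul_const _), integral_const]
            simp [integral_mul_const, integral_div, measure_univ]
        _ ≤ 1 + (lam / w) * (Real.exp (t*w) - 1) := by
            rw [hetw]
            have h2 : lam / w ≤ (∫ ω, Y i ω ∂μ) / w := by
              gcongr
              exact hmean i j
            nlinarith [mul_le_mul_of_nonneg_right h2 hε.le]
        _ = 1 - lam * ε / w := by rw [hetw]; ring
    -- the sum random variable and its Chernoff bound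
    set Z : Ω → ℝ := fun ω => ∑ i, Y i ω with hZdef
    have hZeq : Z = ∑ i, Y i := by
      ext ω; simp [hZdef, Finset.sum_apply]
    have hZmeas : Measurable Z :=
      Finset.measurable_sum Finset.univ fun i _ => hYmeas i
    have hZ0 : ∀ ω, 0 ≤ Z ω := fun ω => Finset.sum_nonneg fun i _ => hY0 i ω
    have hZint : Integrable (fun ω => Real.exp (t * Z ω)) μ :=
      Integrable.mono' (integrable_const 1)
        ((hZmeas.const_mul t).exp.aestronglyMeasurable)
        (ae_of_all _ (hexp_le_one Z hZ0))
    have chernoff := measure_le_le_exp_mul_mgf (μ := μ) (X := Z) (1 - ε) ht hZint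
    have hmgfZ : mgf Z μ t = ∏ i, mgf (Y i) μ t := by
      rw [hZeq]; exact hYindep.mgf_sum hYmeas Finset.univ
    -- strict product bound
    have hprod_le : ∏ i, mgf (Y i) μ t ≤ (1 - lam * ε / w) ^ s := by
      calc ∏ i, mgf (Y i) μ t ≤ ∏ _i : Fin s, (1 - lam * ε / w) :=
            Finset.prod_le_prod (fun i _ => mgf_nonneg) (fun i _ => hmgf_le i)
        _ = (1 - lam * ε / w) ^ s := by simp
    have hstrict : (1 - lam * ε / w) ^ s < Real.exp (-(ε / w)) := by
      have hne : -(lam * ε / w) ≠ 0 := by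
        have : 0 < lam * ε / w := by positivity
        linarith
      have h1 : 1 - lam * ε / w < Real.exp (-(lam * ε / w)) := by
        have := Real.add_one_lt_exp hne
        linarith
      have h2 : (1 - lam * ε / w) ^ s < Real.exp (-(lam * ε / w)) ^ s :=
        pow_lt_pow_left₀ h1 hK0.le hs1
      have h3 : Real.exp (-(lam * ε / w)) ^ s
          = Real.exp ((s:ℝ) * -(lam * ε / w)) := by
        rw [← Real.exp_nat_mul]
      have h4 : (s:ℝ) * -(lam * ε / w) ≤ -(ε / w) := by
        have hεw : 0 ≤ ε / w := (div_pos hε hw).le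
        have hmul := mul_le_mul_of_nonneg_right hslam hεw
        have e1 : (s:ℝ) * -(lam * ε / w) = -((s * lam) * (ε / w)) := by ring
        rw [e1]
        linarith
      calc (1 - lam * ε / w) ^ s < Real.exp ((s:ℝ) * -(lam * ε / w)) := by
            rw [← h3]; exact h2
        _ ≤ Real.exp (-(ε / w)) := Real.exp_le_exp.2 h4
    -- combine
    have hfinal : (μ {ω | Z ω ≤ 1 - ε}).toReal < B := by
      calc (μ {ω | Z ω ≤ 1 - ε}).toReal
          ≤ Real.exp (-t * (1 - ε)) * mgf Z μ t := chernoff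
        _ ≤ Real.exp (-t * (1 - ε)) * ((1 - lam * ε / w) ^ s) := by
            rw [hmgfZ]
            exact mul_le_mul_of_nonneg_left hprod_le (Real.exp_pos _).le
        _ < Real.exp (-t * (1 - ε)) * Real.exp (-(ε / w)) :=
            (mul_lt_mul_iff_right₀ (Real.exp_pos _)).2 hstrict
        _ = B := by
            rw [← Real.exp_add, hB]
            congr 1
            rw [ht_def]
            field_simp
            ring
    have hset : {ω | ∑ i, f (X i ω) j ≤ 1 - ε} = {ω | Z ω ≤ 1 - ε} := rfl
    rw [hset]
    exact hfinal
  -- union bound over the m coordinates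
  have hunion : {ω | ∃ j, ∑ i, f (X i ω) j ≤ 1 - ε}
      = ⋃ j, {ω | ∑ i, f (X i ω) j ≤ 1 - ε} := by
    ext ω; simp
  rw [hunion]
  refine lt_of_le_of_lt (measure_iUnion_fintype_le _ _) ?_
  have hne_top : ∀ j ∈ Finset.univ, μ {ω | ∑ i, f (X i ω) j ≤ 1 - ε} ≠ ⊤ :=
    fun j _ => measure_ne_top μ _
  rw [ENNReal.lt_ofReal_iff_toReal_lt (ENNReal.sum_lt_top.2
      (fun j _ => measure_lt_top μ _)).ne, ENNReal.toReal_sum hne_top]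
  calc ∑ j, (μ {ω | ∑ i, f (X i ω) j ≤ 1 - ε}).toReal
      < ∑ _j : Fin m, B := by
        apply Finset.sum_lt_sum_of_nonempty
        · exact Finset.univ_nonempty_iff.2 ⟨⟨0, hm⟩⟩
        · exact fun j _ => key j
    _ = m * B := by simp [Finset.sum_const, nsmul_eq_mul]
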